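/- Let μ = (μ₁,μ₂) with n = μ₁ + μ₂ even. Then D⁺(μ) = (r₁ − r₂)^n satisfies D⁺(μ) = F̊_n(ē₁, ē₂) where F̊_n(z₁,z₂) = (((n−1)z₁² − 2n z₂)/(μ₁μ₂))^{n/2} and ē_i = σ_μ(e_i). In particular D⁺(μ) is μ-symmetric. -/

import Mathlib

open MvPolynomial

/-- Canonical specialization for a two-part partition `μ = (μ₁,μ₂)`:
`x₁,…,x_{μ₁} ↦ r₁`, `x_{μ₁+1},…,x_n ↦ r₂`. -/
noncomputable def sigma2 (K : Type*) [Field K] (μ1 μ2 : ℕ) :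
    MvPolynomial (Fin (μ1 + μ2)) K →ₐ[K] MvPolynomial (Fin 2) K :=
  MvPolynomial.aeval (fun i : Fin (μ1 + μ2) => if (i : ℕ) < μ1 then X 0 else X 1)

/-- `ē_k = σ_μ(e_k)` for the two-part partition `μ = (μ₁,μ₂)`. -/
noncomputable def ebar (K : Type*) [Field K] (μ1 μ2 k : ℕ) : MvPolynomial (Fin 2) K :=
  sigma2 K μ1 μ2 (esymm (Fin (μ1 + μ2)) K k)

-- Newton for k = 2
lemma two_esymm (σ : Type*) [Fintype σ] (R : Type*) [CommRing R] :
    (2 : MvPolynomial σ R) * esymm σ R 2 = esymm σ R 1 ^ 2 - psum σ R 2 := by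
  have h := psum_eq_mul_esymm_sub_sum σ R 2 (by norm_num)
  have hanti : (Finset.HasAntidiagonal.antidiagonal 2 : Finset (ℕ × ℕ)) = {(0,2),(1,1),(2,0)} := by decide
  rw [hanti] at h
  norm_num [Finset.filter_insert, Finset.filter_singleton] at h
  rw [esymm_one]
  linear_combination h

lemma sum_ite_card {n : Type*} [Fintype n] (p : n → Prop) [DecidablePred p]
    {R : Type*} [CommRing R] (a b : R) :
    ∑ i : n, (if p i then a else b)
      = ((Finset.univ.filter p).card : R) * a + ((Finset.univ.filter (fun i => ¬ p i)).card : R) * b := by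
  rw [Finset.sum_ite, Finset.sum_const, Finset.sum_const]
  simp [nsmul_eq_mul]

lemma card_filter_lt (μ1 μ2 : ℕ) :
    (Finset.univ.filter (fun i : Fin (μ1 + μ2) => (i : ℕ) < μ1)).card = μ1 := by
  rcases Nat.eq_zero_or_pos μ2 with h | h
  · subst h
    rw [show (Finset.univ.filter (fun i : Fin (μ1 + 0) => (i : ℕ) < μ1)) = Finset.univ by
      ext i; simpa using i.2]
    simp
  · have hlt : μ1 < μ1 + μ2 := by omega
    rw [show (Finset.univ.filter (fun i : Fin (μ1 + μ2) => (i : ℕ) < μ1)) = Finset.Iio ⟨μ1, hlt⟩ by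
      ext i; simp [Fin.lt_def]]
    exact Fin.card_Iio _

lemma isSymmetric_pow {σ R : Type*} [CommSemiring R] {φ : MvPolynomial σ R}
    (h : φ.IsSymmetric) (n : ℕ) : (φ ^ n).IsSymmetric := by
  induction n with
  | zero => simpa using MvPolynomial.IsSymmetric.one
  | succ k ih => rw [pow_succ]; exact ih.mul h

/-- For `μ = (μ₁,μ₂)` with `n = μ₁ + μ₂` even,
`D⁺(μ) = (r₁ − r₂)^n = F̊_n(ē₁, ē₂)` where
`F̊_n(z₁,z₂) = (((n−1)z₁² − 2n z₂)/(μ₁μ₂))^{n/2}`; in particular `D⁺(μ)` is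
`μ`-symmetric. -/
theorem stmt10 {K : Type*} [Field K] [CharZero K] (μ1 μ2 : ℕ) (h1 : 1 ≤ μ1) (h2 : 1 ≤ μ2)
    (hn : Even (μ1 + μ2)) :
    (C (((μ1 : K) * μ2)⁻¹) *
          (C (((μ1 + μ2 : ℕ) : K) - 1) * ebar K μ1 μ2 1 ^ 2
            - C (2 * ((μ1 + μ2 : ℕ) : K)) * ebar K μ1 μ2 2)) ^ ((μ1 + μ2) / 2)
        = ((X 0 : MvPolynomial (Fin 2) K) - X 1) ^ (μ1 + μ2) ∧
    ∃ Fhat : MvPolynomial (Fin (μ1 + μ2)) K, Fhat.IsSymmetric ∧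
      sigma2 K μ1 μ2 Fhat = ((X 0 : MvPolynomial (Fin 2) K) - X 1) ^ (μ1 + μ2) := by
  have hcard2 : (Finset.univ.filter (fun i : Fin (μ1 + μ2) => ¬ (i : ℕ) < μ1)).card = μ2 := by
    have := card_filter_lt μ1 μ2
    have htot := Finset.card_filter_add_card_filter_not
      (s := (Finset.univ : Finset (Fin (μ1 + μ2)))) (p := fun i => (i : ℕ) < μ1)
    simp only [Finset.card_univ, Fintype.card_fin] at htot
    omega
  -- ebar 1
  have he1 : ebar K μ1 μ2 1 = C (μ1 : K) * X 0 + C (μ2 : K) * X 1 := by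
    rw [ebar, sigma2, esymm_one, map_sum]
    simp only [aeval_X]
    rw [sum_ite_card]
    rw [card_filter_lt, hcard2]
    simp [map_natCast]
  -- sigma2 of psum 2
  have hp2 : sigma2 K μ1 μ2 (psum (Fin (μ1 + μ2)) K 2)
      = C (μ1 : K) * X 0 ^ 2 + C (μ2 : K) * X 1 ^ 2 := by
    rw [psum, sigma2, map_sum]
    simp only [map_pow, aeval_X, apply_ite (· ^ 2)]
    rw [sum_ite_card, card_filter_lt, hcard2]
    simp [map_natCast]
  -- ebar 2 via Newton
  have he2 : (2 : MvPolynomial (Fin 2) K) * ebar K μ1 μ2 2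
      = ebar K μ1 μ2 1 ^ 2 - (C (μ1 : K) * X 0 ^ 2 + C (μ2 : K) * X 1 ^ 2) := by
    have := congrArg (sigma2 K μ1 μ2) (two_esymm (Fin (μ1 + μ2)) K)
    rw [map_mul, map_sub, map_pow] at this
    rw [hp2] at this
    have h2' : sigma2 K μ1 μ2 (2 : MvPolynomial (Fin (μ1 + μ2)) K) = 2 :=
      map_ofNat _ 2
    rw [h2'] at this
    exact this
  have hab : ((μ1 : K) * μ2) ≠ 0 := by
    have : (μ1 : K) ≠ 0 := Nat.cast_ne_zero.mpr (by omega)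
    have h2' : (μ2 : K) ≠ 0 := Nat.cast_ne_zero.mpr (by omega)
    exact mul_ne_zero this h2'
  -- key identity for the base
  have hbase : (C (((μ1 : K) * μ2)⁻¹) *
      (C (((μ1 + μ2 : ℕ) : K) - 1) * ebar K μ1 μ2 1 ^ 2
        - C (2 * ((μ1 + μ2 : ℕ) : K)) * ebar K μ1 μ2 2))
      = ((X 0 : MvPolynomial (Fin 2) K) - X 1) ^ 2 := by
    have hC : (C (((μ1 : K) * μ2)⁻¹) : MvPolynomial (Fin 2) K) * C ((μ1 : K) * μ2) = 1 := by
      rw [← C_mul, inv_mul_cancel₀ hab, C_1]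
    have key : (C (((μ1 + μ2 : ℕ) : K) - 1) * ebar K μ1 μ2 1 ^ 2
        - C (2 * ((μ1 + μ2 : ℕ) : K)) * ebar K μ1 μ2 2)
        = C ((μ1 : K) * μ2) * ((X 0 : MvPolynomial (Fin 2) K) - X 1) ^ 2 := by
      have hn2 : (C (2 * ((μ1 + μ2 : ℕ) : K)) : MvPolynomial (Fin 2) K)
          * ebar K μ1 μ2 2 = C (((μ1 + μ2 : ℕ) : K)) *
            (ebar K μ1 μ2 1 ^ 2 - (C (μ1 : K) * X 0 ^ 2 + C (μ2 : K) * X 1 ^ 2)) := by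
        rw [← he2, C_mul, show (C (2:K) : MvPolynomial (Fin 2) K) = 2 from map_ofNat _ 2]; ring
      rw [hn2, he1]
      simp only [Nat.cast_add, C_add, C_sub, C_mul, C_1]
      ring
    rw [key, ← mul_assoc, hC, one_mul]
  constructor
  · rw [hbase, ← pow_mul, Nat.mul_div_cancel' hn.two_dvd]
  · refine ⟨(C (((μ1 : K) * μ2)⁻¹) *
      (C (((μ1 + μ2 : ℕ) : K) - 1) * (esymm (Fin (μ1 + μ2)) K 1) ^ 2
        - C (2 * ((μ1 + μ2 : ℕ) : K)) * (esymm (Fin (μ1 + μ2)) K 2))) ^ ((μ1 + μ2) / 2),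
      ?_, ?_⟩
    · exact isSymmetric_pow ((IsSymmetric.C _).mul
        (((IsSymmetric.C _).mul (isSymmetric_pow (esymm_isSymmetric _ K 1) 2)).sub
          ((IsSymmetric.C _).mul (esymm_isSymmetric _ K 2)))) _
    · have hC : ∀ x : K, sigma2 K μ1 μ2 (C x) = C x := by
        intro x; simp [sigma2, algebraMap_eq]
      rw [map_pow, map_mul, map_sub, map_mul, map_mul, map_pow, hC, hC, hC]
      rw [show sigma2 K μ1 μ2 (esymm (Fin (μ1 + μ2)) K 1) = ebar K μ1 μ2 1 from rfl,
        show sigma2 K μ1 μ2 (esymm (Fin (μ1 + μ2)) K 2) = ebar K μ1 μ2 2 from rfl]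
      rw [hbase, ← pow_mul, Nat.mul_div_cancel' hn.two_dvd]
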